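/- Assume p satisfies 1 < p⁻ ≤ p⁺ < ∞ and the Ambrosetti–Rabinowitz condition holds for f with exponent θ > p⁺: 0 < θF(t) ≤ tf(t) for |t| > R₀. If {u_n} ⊂ E satisfies I(u_n) ≤ M and I'(u_n) → 0, where I(u) = ∫_Ω P(|Δu|) dx − ∫_Ω F(u) dx, then ∫_Ω P(|Δu_n|) dx is bounded; in particular {u_n} is bounded in E. -/

import Mathlib

open Set MeasureTheory Filter

/-- The Laplacian of a real-valued function on `ℝⁿ`. -/
noncomputable def lap {n : ℕ} (u : (Fin n → ℝ) → ℝ) (x : Fin n → ℝ) : ℝ :=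
  ∑ i, fderiv ℝ (fun y => fderiv ℝ u y (Pi.single i 1)) x (Pi.single i 1)

/-- The Luxemburg norm of `u` on `Ω` with respect to the N-function `P`. -/
noncomputable def luxemburgNorm {N : ℕ} (P : ℝ → ℝ) (Ω : Set (Fin N → ℝ))
    (u : (Fin N → ℝ) → ℝ) : ℝ :=
  sInf {k : ℝ | 0 < k ∧ ∫ x in Ω, P (|u x| / k) ≤ 1}

/- ### Auxiliary machinery -/

/-- Monotone extension of `p` by `0` on the nonpositive axis. -/
noncomputable def ptilde (p : ℝ → ℝ) (t : ℝ) : ℝ := if t ≤ 0 then 0 else p t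

/-- The primitive of `ptilde p`. -/
noncomputable def Qf (p : ℝ → ℝ) (x : ℝ) : ℝ := ∫ s in (0:ℝ)..x, ptilde p s

/-- A generalized inverse of `Qf p`. -/
noncomputable def Qinv (p : ℝ → ℝ) (s : ℝ) : ℝ := sSup {t | Qf p t ≤ s}

/-- The monotone function agreeing with `t ↦ t * p t` on the nonnegative axis. -/
noncomputable def qt (p : ℝ → ℝ) (t : ℝ) : ℝ := ptilde p t * max t 0

section Aux
variable {p P : ℝ → ℝ}

lemma ptilde_nonneg (hp_pos : ∀ t > 0, 0 < p t) (t : ℝ) : 0 ≤ ptilde p t := by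
  unfold ptilde; split
  · exact le_refl _
  · exact (hp_pos t (by linarith [lt_of_not_ge ‹¬ t ≤ 0›])).le

lemma ptilde_mono (hp_pos : ∀ t > 0, 0 < p t) (hp_mono : StrictMonoOn p (Ioi 0)) :
    Monotone (ptilde p) := by
  intro s t hst
  unfold ptilde
  by_cases hs : s ≤ 0 <;> by_cases ht : t ≤ 0 <;> simp [hs, ht]
  · exact (hp_pos t (lt_of_not_ge ht)).le
  · linarith
  · rcases eq_or_lt_of_le hst with rfl | h
    · exact le_refl _
    · exact (hp_mono (lt_of_not_ge hs) (lt_of_not_ge ht) h).le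

lemma qt_mono (hp_pos : ∀ t > 0, 0 < p t) (hpm : Monotone (ptilde p)) :
    Monotone (qt p) := by
  intro s t hst
  unfold qt
  rcases le_or_gt s 0 with hs | hs
  · rw [show ptilde p s = 0 from if_pos hs, zero_mul]
    exact mul_nonneg (ptilde_nonneg hp_pos t) (le_max_right _ _)
  · have ht : 0 < t := lt_of_lt_of_le hs hst
    rw [max_eq_left hs.le, max_eq_left ht.le]
    exact mul_le_mul (hpm hst) hst hs.le (ptilde_nonneg hp_pos t)

lemma Qf_eq_P (hP : ∀ t, P t = ∫ s in (0:ℝ)..t, p s) {t : ℝ} (ht : 0 ≤ t) :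
    Qf p t = P t := by
  rw [hP]
  apply intervalIntegral.integral_congr_ae
  filter_upwards with x hx
  rw [Set.uIoc_of_le ht] at hx
  unfold ptilde
  rw [if_neg (not_le.2 hx.1)]

lemma Qf_add (hpm : Monotone (ptilde p)) (a b : ℝ) :
    Qf p b = Qf p a + ∫ s in a..b, ptilde p s :=
  (intervalIntegral.integral_add_adjacent_intervals hpm.intervalIntegrable
    hpm.intervalIntegrable).symm

lemma int_ge (hpm : Monotone (ptilde p)) {a b : ℝ} (hab : a ≤ b) :
    (b - a) * ptilde p a ≤ ∫ s in a..b, ptilde p s := by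
  have := intervalIntegral.integral_mono_on (μ := volume) (f := fun _ => ptilde p a)
    (g := ptilde p) hab (intervalIntegrable_const) hpm.intervalIntegrable
    (fun x hx => hpm hx.1)
  simpa using this

lemma int_le (hpm : Monotone (ptilde p)) {a b : ℝ} (hab : a ≤ b) :
    (∫ s in a..b, ptilde p s) ≤ (b - a) * ptilde p b := by
  have := intervalIntegral.integral_mono_on (μ := volume) (f := ptilde p)
    (g := fun _ => ptilde p b) hab hpm.intervalIntegrable (intervalIntegrable_const)
    (fun x hx => hpm hx.2)
  simpa using this

lemma Qf_zero_of_nonpos (hpm : Monotone (ptilde p)) {t : ℝ} (ht : t ≤ 0) : Qf p t = 0 := by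
  unfold Qf
  rw [intervalIntegral.integral_symm]
  have : (∫ s in t..(0:ℝ), ptilde p s) = ∫ s in t..(0:ℝ), (0:ℝ) := by
    apply intervalIntegral.integral_congr
    intro x hx
    rw [Set.uIcc_of_le ht] at hx
    simp only [ptilde, if_pos hx.2]
  rw [this]; simp

lemma Qf_nonneg (hpm : Monotone (ptilde p)) (hpn : ∀ t, 0 ≤ ptilde p t) (t : ℝ) :
    0 ≤ Qf p t := by
  rcases le_or_gt t 0 with h | h
  · rw [Qf_zero_of_nonpos hpm h]
  · rw [Qf_add hpm 0 t, Qf_zero_of_nonpos hpm le_rfl]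
    have : 0 ≤ ∫ s in (0:ℝ)..t, ptilde p s :=
      intervalIntegral.integral_nonneg h.le (fun x _ => hpn x)
    linarith

lemma Qf_mono (hpm : Monotone (ptilde p)) (hpn : ∀ t, 0 ≤ ptilde p t) : Monotone (Qf p) := by
  intro a b hab
  have h : Qf p a + ∫ s in a..b, ptilde p s = Qf p b := (Qf_add hpm a b).symm
  have h2 : 0 ≤ ∫ s in a..b, ptilde p s :=
    intervalIntegral.integral_nonneg hab (fun x _ => hpn x)
  linarith

lemma Qf_strictMonoOn (hp_pos : ∀ t > 0, 0 < p t) (hpm : Monotone (ptilde p))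
    (hpn : ∀ t, 0 ≤ ptilde p t) : StrictMonoOn (Qf p) (Ici 0) := by
  intro x hx y hy hxy
  set m := (x + y) / 2 with hm
  have hxm : x ≤ m := by simp only [hm]; linarith
  have hmy : m ≤ y := by simp only [hm]; linarith
  have hmpos : 0 < m := by simp only [hm]; simp only [mem_Ici] at hx; linarith
  have h1 : Qf p y = Qf p x + ∫ s in x..y, ptilde p s := Qf_add hpm x y
  have h2 : (∫ s in x..y, ptilde p s) = (∫ s in x..m, ptilde p s) + ∫ s in m..y, ptilde p s :=
    (intervalIntegral.integral_add_adjacent_intervals hpm.intervalIntegrable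
      hpm.intervalIntegrable).symm
  have h3 : 0 ≤ ∫ s in x..m, ptilde p s := intervalIntegral.integral_nonneg hxm (fun t _ => hpn t)
  have h4 : (y - m) * ptilde p m ≤ ∫ s in m..y, ptilde p s := int_ge hpm hmy
  have h5 : 0 < (y - m) * ptilde p m := by
    apply mul_pos (by simp only [hm]; linarith)
    have : ptilde p m = p m := if_neg (not_le.2 hmpos)
    rw [this]; exact hp_pos m hmpos
  linarith

lemma Qf_unbounded (hp_pos : ∀ t > 0, 0 < p t) (hpm : Monotone (ptilde p))
    (hpn : ∀ t, 0 ≤ ptilde p t) (s : ℝ) : ∃ T, 1 ≤ T ∧ s < Qf p T := by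
  have hp1 : 0 < p 1 := hp_pos 1 one_pos
  have hpt1 : ptilde p 1 = p 1 := if_neg (by norm_num)
  refine ⟨1 + (max s 0 + 1) / p 1, ?_, ?_⟩
  · have : 0 ≤ (max s 0 + 1) / p 1 := by positivity
    linarith
  · set T := 1 + (max s 0 + 1) / p 1 with hT
    have h1T : (1:ℝ) ≤ T := by
      have : 0 ≤ (max s 0 + 1) / p 1 := by positivity
      simp only [hT]; linarith
    have h1 : Qf p T = Qf p 1 + ∫ s in (1:ℝ)..T, ptilde p s := Qf_add hpm 1 T
    have h2 : (T - 1) * ptilde p 1 ≤ ∫ s in (1:ℝ)..T, ptilde p s := int_ge hpm h1T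
    have h3 : (T - 1) * ptilde p 1 = max s 0 + 1 := by
      rw [hpt1]; simp only [hT]; field_simp; ring
    have h4 : 0 ≤ Qf p 1 := Qf_nonneg hpm hpn 1
    have : s ≤ max s 0 := le_max_left _ _
    linarith

lemma Qset_bddAbove (hQm : Monotone (Qf p)) (hQub : ∀ s, ∃ T, 1 ≤ T ∧ s < Qf p T) (s : ℝ) :
    BddAbove {t | Qf p t ≤ s} := by
  obtain ⟨T, _, hT⟩ := hQub s
  refine ⟨T, fun t ht => ?_⟩
  by_contra h
  push_neg at h
  exact absurd (le_trans (hQm h.le) ht) (not_le.2 hT)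

lemma Qinv_Qf (hQm : Monotone (Qf p)) (hQsm : StrictMonoOn (Qf p) (Ici 0))
    (hQ0 : ∀ t ≤ 0, Qf p t = 0) {t : ℝ} (ht : 0 ≤ t) : Qinv p (Qf p t) = t := by
  have hset : {t' | Qf p t' ≤ Qf p t} = Iic t := by
    ext t'
    simp only [mem_setOf_eq, mem_Iic]
    constructor
    · intro h
      by_contra hgt
      push_neg at hgt
      exact absurd h (not_le.2 (hQsm ht (le_trans ht hgt.le) hgt))
    · intro h
      rcases le_or_gt t' 0 with h0 | h0
      · rw [hQ0 t' h0]; exact le_trans (by rw [hQ0 0 le_rfl]) (hQm ht)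
      · exact hQm h
  unfold Qinv
  rw [hset, csSup_Iic]

lemma Qinv_mono (hQm : Monotone (Qf p)) (hQ0 : ∀ t ≤ 0, Qf p t = 0)
    (hQnn : ∀ t, 0 ≤ Qf p t) (hQub : ∀ s, ∃ T, 1 ≤ T ∧ s < Qf p T) :
    Monotone (Qinv p) := by
  intro s₁ s₂ h
  unfold Qinv
  rcases Set.eq_empty_or_nonempty {t | Qf p t ≤ s₁} with he | hne
  · rw [he, Real.sSup_empty]
    rcases Set.eq_empty_or_nonempty {t | Qf p t ≤ s₂} with he2 | hne2
    · rw [he2, Real.sSup_empty]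
    · obtain ⟨t₀, ht₀⟩ := hne2
      have h0 : (0:ℝ) ∈ {t | Qf p t ≤ s₂} := by
        simp only [mem_setOf_eq] at ht₀ ⊢
        rw [hQ0 0 le_rfl]
        linarith [hQnn t₀]
      exact le_csSup (Qset_bddAbove hQm hQub s₂) h0
  · exact csSup_le_csSup (Qset_bddAbove hQm hQub s₂) hne (fun t ht => le_trans ht h)

lemma Qf_div_le (hpm : Monotone (ptilde p)) (hQ0 : Qf p 0 = 0)
    {t A : ℝ} (ht : 0 ≤ t) (hA : 1 ≤ A) :
    Qf p (t / A) ≤ Qf p t / A := by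
  have hA0 : 0 < A := by linarith
  rcases eq_or_lt_of_le ht with rfl | htpos
  · simp only [zero_div]; rw [hQ0]; simp
  rcases eq_or_lt_of_le hA with rfl | hA1
  · simp
  set s := t / A with hs
  have hspos : 0 < s := div_pos htpos hA0
  have hst : s < t := by
    rw [hs, div_lt_iff₀ hA0]
    nlinarith
  have h1 : Qf p s ≤ s * ptilde p s := by
    have := int_le hpm hspos.le
    have h2 : Qf p s = Qf p 0 + ∫ x in (0:ℝ)..s, ptilde p x := Qf_add hpm 0 s
    rw [hQ0] at h2
    simpa [h2] using this
  have h2 : Qf p s / s ≤ ptilde p s := (div_le_iff₀ hspos).2 (by linarith [h1])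
  have h3 : Qf p t = Qf p s + ∫ x in s..t, ptilde p x := Qf_add hpm s t
  have h4 : (t - s) * ptilde p s ≤ ∫ x in s..t, ptilde p x := int_ge hpm hst.le
  have h5 : (t - s) * (Qf p s / s) ≤ (t - s) * ptilde p s :=
    mul_le_mul_of_nonneg_left h2 (by linarith)
  have h6 : Qf p s * A ≤ Qf p t := by
    have hts : t / s = A := by rw [hs]; field_simp
    have : Qf p s + (t - s) * (Qf p s / s) = Qf p s * (t / s) := by
      field_simp; ring
    rw [hts] at this
    linarith
  rw [le_div_iff₀ hA0]
  linarith

end Aux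

/-- a Palais–Smale sequence for `I(u) = ∫_Ω P(|Δu|) − ∫_Ω F(u)` is bounded,
under the Ambrosetti–Rabinowitz condition with `θ > p⁺`. -/
theorem PS_sequence_bounded {N : ℕ}
    (Ω : Set (Fin N → ℝ)) (hΩmeas : MeasurableSet Ω) (hΩbdd : Bornology.IsBounded Ω)
    (p P : ℝ → ℝ)
    (hP : ∀ t, P t = ∫ s in (0:ℝ)..t, p s)
    (hp_pos : ∀ t > 0, 0 < p t) (hp_mono : StrictMonoOn p (Ioi 0))
    (pminus pplus : ℝ) (h1 : 1 < pminus) (h2 : pminus ≤ pplus)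
    (hlow : ∀ t > 0, pminus ≤ t * p t / P t)
    (hhigh : ∀ t > 0, t * p t / P t ≤ pplus)
    (f F : ℝ → ℝ) (hf : Continuous f) (hF : ∀ t, F t = ∫ s in (0:ℝ)..t, f s)
    (θ R₀ : ℝ) (hθ : pplus < θ) (hR₀ : 0 < R₀)
    (hAR : ∀ t : ℝ, R₀ < |t| → 0 < θ * F t ∧ θ * F t ≤ t * f t)
    (u : ℕ → (Fin N → ℝ) → ℝ)
    (M : ℝ)
    (hbound : ∀ n, (∫ x in Ω, P (|lap (u n) x|)) - (∫ x in Ω, F (u n x)) ≤ M)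
    (ε : ℕ → ℝ) (hε_pos : ∀ n, 0 ≤ ε n) (hε : Tendsto ε atTop (nhds 0))
    (hderiv : ∀ n,
      |(∫ x in Ω, p (|lap (u n) x|) * |lap (u n) x|) - (∫ x in Ω, f (u n x) * u n x)|
        ≤ ε n * luxemburgNorm P Ω (lap (u n))) :
    (∃ B : ℝ, ∀ n, ∫ x in Ω, P (|lap (u n) x|) ≤ B) ∧
      (∃ B' : ℝ, ∀ n, luxemburgNorm P Ω (lap (u n)) ≤ B') := by
  -- basic positivity facts about p and P
  have hθpos : 0 < θ := lt_trans (lt_of_lt_of_le (lt_trans one_pos h1) h2) hθ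
  have hpm : Monotone (ptilde p) := ptilde_mono hp_pos hp_mono
  have hpn : ∀ t, 0 ≤ ptilde p t := ptilde_nonneg hp_pos
  have hQm : Monotone (Qf p) := Qf_mono hpm hpn
  have hQnn : ∀ t, 0 ≤ Qf p t := Qf_nonneg hpm hpn
  have hQsm : StrictMonoOn (Qf p) (Ici 0) := Qf_strictMonoOn hp_pos hpm hpn
  have hQ0 : ∀ t ≤ 0, Qf p t = 0 := fun t ht => Qf_zero_of_nonpos hpm ht
  have hQub : ∀ s, ∃ T, 1 ≤ T ∧ s < Qf p T := Qf_unbounded hp_pos hpm hpn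
  have hQeq : ∀ t, 0 ≤ t → Qf p t = P t := fun t ht => Qf_eq_P hP ht
  have hP0 : P 0 = 0 := by rw [hP 0, intervalIntegral.integral_same]
  have hPpos : ∀ t > 0, 0 < P t := by
    intro t ht
    have hlo := hlow t ht
    have htp : 0 < t * p t := mul_pos ht (hp_pos t ht)
    by_contra hle
    push_neg at hle
    rcases eq_or_lt_of_le hle with he | hlt
    · rw [he, div_zero] at hlo; linarith
    · have : t * p t / P t < 0 := div_neg_of_pos_of_neg htp hlt
      linarith
  have hPnn : ∀ t, 0 ≤ t → 0 ≤ P t := by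
    intro t ht
    rcases eq_or_lt_of_le ht with rfl | h
    · rw [hP0]
    · exact (hPpos t h).le
  have hlow' : ∀ t, 0 ≤ t → pminus * P t ≤ t * p t := by
    intro t ht
    rcases eq_or_lt_of_le ht with rfl | h
    · rw [hP0]; simp
    · have := (le_div_iff₀ (hPpos t h)).1 (hlow t h)
      linarith
  have hhigh' : ∀ t, 0 ≤ t → t * p t ≤ pplus * P t := by
    intro t ht
    rcases eq_or_lt_of_le ht with rfl | h
    · rw [hP0]; simp
    · have := (div_le_iff₀ (hPpos t h)).1 (hhigh t h)
      linarith
  -- the constant C₀ controlling θ F t - t f t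
  have hFc : Continuous F := by
    have : Continuous fun t => ∫ s in (0:ℝ)..t, f s :=
      intervalIntegral.continuous_primitive (fun a b => hf.intervalIntegrable a b) 0
    exact this.congr (fun t => (hF t).symm)
  obtain ⟨C₀, hC₀nn, hC₀⟩ : ∃ C₀ : ℝ, 0 ≤ C₀ ∧ ∀ t, θ * F t - t * f t ≤ C₀ := by
    have hh : Continuous fun t => θ * F t - t * f t :=
      (continuous_const.mul hFc).sub (continuous_id.mul hf)
    obtain ⟨C, hC⟩ := (isCompact_Icc (a := -R₀) (b := R₀)).bddAbove_image hh.continuousOn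
    refine ⟨max C 0, le_max_right _ _, fun t => ?_⟩
    rcases le_or_gt (|t|) R₀ with h | h
    · exact le_trans (hC ⟨t, abs_le.1 h, rfl⟩) (le_max_left _ _)
    · have := (hAR t h).2
      exact le_trans (by linarith) (le_max_right _ _)
  -- the finite measure of Ω
  haveI : IsFiniteMeasure (volume.restrict Ω) :=
    ⟨by rw [Measure.restrict_apply_univ]; exact hΩbdd.measure_lt_top⟩
  set V : ℝ := (volume Ω).toReal with hV
  have hVnn : 0 ≤ V := ENNReal.toReal_nonneg
  -- abbreviations
  set A : ℕ → ℝ := fun n => ∫ x in Ω, P (|lap (u n) x|) with hA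
  have hAnn : ∀ n, 0 ≤ A n := by
    intro n
    apply integral_nonneg
    intro x
    exact hPnn _ (abs_nonneg _)
  -- measurability of |lap (u n)| given integrability of P(|lap (u n)|)
  have hvmeas : ∀ n, Integrable (fun x => P (|lap (u n) x|)) (volume.restrict Ω) →
      AEMeasurable (fun x => |lap (u n) x|) (volume.restrict Ω) := by
    intro n hg₁
    have h := ((Qinv_mono hQm hQ0 hQnn hQub).measurable.comp_aemeasurable hg₁.aemeasurable)
    apply h.congr
    filter_upwards with x
    have : Qinv p (P (|lap (u n) x|)) = |lap (u n) x| := by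
      rw [← hQeq _ (abs_nonneg _)]
      exact Qinv_Qf hQm hQsm hQ0 (abs_nonneg _)
    exact this
  -- integrability of p(|v|)|v| given integrability of P(|v|)
  have hg₂int : ∀ n, Integrable (fun x => P (|lap (u n) x|)) (volume.restrict Ω) →
      Integrable (fun x => p (|lap (u n) x|) * |lap (u n) x|) (volume.restrict Ω) := by
    intro n hg₁
    have hvm := hvmeas n hg₁
    have hqm : Measurable (qt p) := (qt_mono hp_pos hpm).measurable
    have haem : AEMeasurable (fun x => p (|lap (u n) x|) * |lap (u n) x|) (volume.restrict Ω) := by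
      apply (hqm.comp_aemeasurable hvm).congr
      filter_upwards with x
      show qt p (|lap (u n) x|) = p (|lap (u n) x|) * |lap (u n) x|
      rcases eq_or_lt_of_le (abs_nonneg (lap (u n) x)) with he | hpos
      · rw [← he]; simp [qt, ptilde]
      · simp only [qt]
        rw [show ptilde p |lap (u n) x| = p |lap (u n) x| from if_neg (not_le.2 hpos),
          max_eq_left (le_of_lt hpos)]
    apply Integrable.mono' (hg₁.const_mul pplus) haem.aestronglyMeasurable
    filter_upwards with x
    rw [Real.norm_eq_abs, abs_of_nonneg]
    · have := hhigh' _ (abs_nonneg (lap (u n) x))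
      linarith [this]
    · rcases eq_or_lt_of_le (abs_nonneg (lap (u n) x)) with he | hpos
      · rw [← he]; simp
      · exact le_of_lt (mul_pos (hp_pos _ hpos) hpos)
  -- the Luxemburg norm bound: L_n ≤ max 1 (A n)
  have hlux : ∀ n, luxemburgNorm P Ω (lap (u n)) ≤ max 1 (A n) := by
    intro n
    set k : ℝ := max 1 (A n) with hk
    have hk1 : (1:ℝ) ≤ k := le_max_left _ _
    have hk0 : (0:ℝ) < k := lt_of_lt_of_le one_pos hk1
    have hmem : k ∈ {k : ℝ | 0 < k ∧ ∫ x in Ω, P (|lap (u n) x| / k) ≤ 1} := by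
      refine ⟨hk0, ?_⟩
      by_cases hg₁ : Integrable (fun x => P (|lap (u n) x|)) (volume.restrict Ω)
      · -- integrable case
        have hvm := hvmeas n hg₁
        have hφ : Monotone fun t => Qf p (t / k) := by
          intro s t hst
          exact hQm (by gcongr)
        have haem : AEMeasurable (fun x => P (|lap (u n) x| / k)) (volume.restrict Ω) := by
          apply (hφ.measurable.comp_aemeasurable hvm).congr
          filter_upwards with x
          show Qf p (|lap (u n) x| / k) = P (|lap (u n) x| / k)
          exact hQeq _ (div_nonneg (abs_nonneg _) hk0.le)
        have hptwise : ∀ x, P (|lap (u n) x| / k) ≤ P (|lap (u n) x|) / k := by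
          intro x
          have := Qf_div_le hpm (hQ0 0 le_rfl) (abs_nonneg (lap (u n) x)) hk1
          rwa [hQeq _ (div_nonneg (abs_nonneg _) hk0.le), hQeq _ (abs_nonneg _)] at this
        have hint : Integrable (fun x => P (|lap (u n) x| / k)) (volume.restrict Ω) := by
          apply Integrable.mono' (hg₁.div_const k) haem.aestronglyMeasurable
          filter_upwards with x
          rw [Real.norm_eq_abs, abs_of_nonneg (hPnn _ (div_nonneg (abs_nonneg _) hk0.le))]
          exact hptwise x
        have hle : (∫ x in Ω, P (|lap (u n) x| / k)) ≤ ∫ x in Ω, P (|lap (u n) x|) / k :=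
          integral_mono hint (hg₁.div_const k) hptwise
        have heq : (∫ x in Ω, P (|lap (u n) x|) / k) = A n / k := by
          rw [integral_div]
        have : A n / k ≤ 1 := by
          rw [div_le_one hk0]
          exact le_max_right _ _
        linarith
      · -- non-integrable case: A n = 0, k = 1
        have hA0 : A n = 0 := by rw [hA]; exact integral_undef hg₁
        have hkeq : k = 1 := by rw [hk, hA0]; simp
        rw [hkeq]
        simp only [div_one]
        rw [integral_undef hg₁]
        norm_num
    have hbdd : BddBelow {k : ℝ | 0 < k ∧ ∫ x in Ω, P (|lap (u n) x| / k) ≤ 1} :=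
      ⟨0, fun x hx => hx.1.le⟩
    exact csInf_le hbdd hmem
  -- the threshold for ε
  set δ : ℝ := min ((θ - pplus) / 2) (pminus / 2) with hδ
  have hδpos : 0 < δ := lt_min (by linarith) (by linarith)
  -- the uniform bound for large n
  set B₁ : ℝ := max 1 (max M ((θ * M + V * C₀) * (2 / (θ - pplus)))) with hB₁
  have hB₁1 : (1:ℝ) ≤ B₁ := le_max_left _ _
  have key : ∀ n, ε n ≤ δ → A n ≤ B₁ := by
    intro n hεn
    by_cases hg₁ : Integrable (fun x => P (|lap (u n) x|)) (volume.restrict Ω)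
    case neg =>
      have hA0 : A n = 0 := integral_undef hg₁
      rw [hA0]; linarith
    case pos =>
      have hg₂ := hg₂int n hg₁
      have hKlow : pminus * A n ≤ ∫ x in Ω, p (|lap (u n) x|) * |lap (u n) x| := by
        have h := integral_mono (hg₁.const_mul pminus) hg₂
          (fun x => by simpa [mul_comm] using hlow' _ (abs_nonneg (lap (u n) x)))
        rwa [integral_const_mul] at h
      have hKhigh : (∫ x in Ω, p (|lap (u n) x|) * |lap (u n) x|) ≤ pplus * A n := by
        have h := integral_mono hg₂ (hg₁.const_mul pplus)
          (fun x => by simpa [mul_comm] using hhigh' _ (abs_nonneg (lap (u n) x)))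
        rwa [integral_const_mul] at h
      have hLn := hlux n
      have hLnn : 0 ≤ luxemburgNorm P Ω (lap (u n)) := by
        apply Real.sInf_nonneg
        intro x hx
        exact hx.1.le
      have hεL : ε n * luxemburgNorm P Ω (lap (u n)) ≤ δ * max 1 (A n) := by
        calc ε n * luxemburgNorm P Ω (lap (u n)) ≤ ε n * max 1 (A n) :=
              mul_le_mul_of_nonneg_left hLn (hε_pos n)
          _ ≤ δ * max 1 (A n) :=
              mul_le_mul_of_nonneg_right hεn (le_trans zero_le_one (le_max_left _ _))
      by_cases hg₃ : Integrable (fun x => F (u n x)) (volume.restrict Ω)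
      case neg =>
        have hG0 : (∫ x in Ω, F (u n x)) = 0 := integral_undef hg₃
        have := hbound n
        rw [hG0] at this
        have : A n ≤ M := by linarith
        exact le_trans this (le_trans (le_max_left _ _) (le_max_right _ _))
      case pos =>
        by_cases hg₄ : Integrable (fun x => f (u n x) * u n x) (volume.restrict Ω)
        case neg =>
          have hH0 : (∫ x in Ω, f (u n x) * u n x) = 0 := integral_undef hg₄
          have hd := hderiv n
          rw [hH0, sub_zero] at hd
          have hK : (∫ x in Ω, p (|lap (u n) x|) * |lap (u n) x|) ≤ δ * max 1 (A n) :=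
            le_trans (le_abs_self _) (le_trans hd hεL)
          rcases le_or_gt (A n) 1 with h | h
          · linarith
          · exfalso
            rw [max_eq_right h.le] at hK
            have hδ2 : δ ≤ pminus / 2 := min_le_right _ _
            nlinarith
        case pos =>
          have hd := hderiv n
          have hd2 : (∫ x in Ω, f (u n x) * u n x)
              - (∫ x in Ω, p (|lap (u n) x|) * |lap (u n) x|) ≤ δ * max 1 (A n) := by
            have := neg_abs_le ((∫ x in Ω, p (|lap (u n) x|) * |lap (u n) x|)
              - (∫ x in Ω, f (u n x) * u n x))
            linarith
          have hGH : θ * (∫ x in Ω, F (u n x)) - (∫ x in Ω, f (u n x) * u n x) ≤ V * C₀ :=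
            calc θ * (∫ x in Ω, F (u n x)) - (∫ x in Ω, f (u n x) * u n x)
                = ∫ x in Ω, (θ * F (u n x) - f (u n x) * u n x) := by
                  rw [integral_sub (hg₃.const_mul θ) hg₄, integral_const_mul]
              _ ≤ ∫ _x in Ω, (C₀:ℝ) :=
                  integral_mono ((hg₃.const_mul θ).sub hg₄) (integrable_const C₀)
                    (fun x => by
                      show θ * F (u n x) - f (u n x) * u n x ≤ C₀
                      rw [mul_comm (f (u n x)) (u n x)]
                      exact hC₀ (u n x))
              _ = V * C₀ := by rw [setIntegral_const, smul_eq_mul]; rfl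
          have hsum : θ * A n - θ * (∫ x in Ω, F (u n x)) ≤ θ * M := by
            have h := mul_le_mul_of_nonneg_left (hbound n) hθpos.le
            nlinarith [h]
          have hmain : θ * A n ≤ θ * M + V * C₀ + pplus * A n + δ * max 1 (A n) := by
            linarith
          rcases le_or_gt (A n) 1 with h | h
          · linarith
          · rw [max_eq_right h.le] at hmain
            have hδ1 : δ ≤ (θ - pplus) / 2 := min_le_left _ _
            have hstep : (θ - pplus) / 2 * A n ≤ θ * M + V * C₀ := by nlinarith
            have hc : (0:ℝ) < θ - pplus := by linarith
            have h5 : A n ≤ (θ * M + V * C₀) / ((θ - pplus) / 2) := by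
              rw [le_div_iff₀ (by linarith : (0:ℝ) < (θ - pplus) / 2)]
              nlinarith [hstep]
            have heq2 : (θ * M + V * C₀) / ((θ - pplus) / 2)
                = (θ * M + V * C₀) * (2 / (θ - pplus)) := by
              field_simp
            have : A n ≤ (θ * M + V * C₀) * (2 / (θ - pplus)) := by
              rw [← heq2]; exact h5
            exact le_trans this (le_trans (le_max_right _ _) (le_max_right _ _))
  -- choose n₀
  obtain ⟨n₀, hn₀⟩ : ∃ n₀, ∀ n ≥ n₀, ε n ≤ δ := by
    have hev : ∀ᶠ n in atTop, ε n < δ := hε.eventually (eventually_lt_nhds hδpos)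
    obtain ⟨n₀, hn₀⟩ := eventually_atTop.1 hev
    exact ⟨n₀, fun n hn => (hn₀ n hn).le⟩
  set B : ℝ := B₁ + ∑ i ∈ Finset.range n₀, A i with hB
  have hsumnn : 0 ≤ ∑ i ∈ Finset.range n₀, A i :=
    Finset.sum_nonneg (fun i _ => hAnn i)
  have hAB : ∀ n, A n ≤ B := by
    intro n
    rcases lt_or_ge n n₀ with h | h
    · have h1 : A n ≤ ∑ i ∈ Finset.range n₀, A i :=
        Finset.single_le_sum (fun i _ => hAnn i) (Finset.mem_range.2 h)
      rw [hB]; linarith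
    · have := key n (hn₀ n h)
      rw [hB]; linarith
  refine ⟨⟨B, fun n => hAB n⟩, ⟨max 1 B, fun n => ?_⟩⟩
  exact le_trans (hlux n) (max_le_max le_rfl (hAB n))
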